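/- For every m ∈ ℕ, the function v_m(x) = C_m^{n+1}(cos(πx)) · (sin(πx))^{n+1}, where C_m^{n+1} is the Gegenbauer polynomial of degree m with parameter n+1, satisfies the differential equation -v_m''(x) + n(n+1)·(π²/sin²(πx))·v_m(x) = π²(m+n+1)²·v_m(x) for all x ∈ (0,1). -/

import Mathlib

open Polynomial Real

/-- Gegenbauer polynomials `C_m^ν`, defined by the standard three-term recurrence
`(m+2)·C_{m+2}^ν(x) = 2(m+1+ν)·x·C_{m+1}^ν(x) - (m+2ν)·C_m^ν(x)`,
with `C_0^ν = 1` and `C_1^ν = 2ν·x`. -/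
noncomputable def gegenbauer (ν : ℝ) : ℕ → Polynomial ℝ
  | 0 => 1
  | 1 => Polynomial.C (2 * ν) * Polynomial.X
  | (m + 2) =>
      Polynomial.C (2 * ((m : ℝ) + 1 + ν) / ((m : ℝ) + 2)) * Polynomial.X *
          gegenbauer ν (m + 1)
        - Polynomial.C (((m : ℝ) + 2 * ν) / ((m : ℝ) + 2)) * gegenbauer ν m

lemma geg_rec (ν : ℝ) (m : ℕ) :
    C ((m : ℝ) + 2) * gegenbauer ν (m + 2)
      = C (2 * ((m : ℝ) + 1 + ν)) * X * gegenbauer ν (m + 1)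
        - C ((m : ℝ) + 2 * ν) * gegenbauer ν m := by
  have hb : ((m : ℝ) + 2) ≠ 0 := by positivity
  have h1 : C ((m : ℝ) + 2) * C (2 * ((m : ℝ) + 1 + ν) / ((m : ℝ) + 2))
      = C (2 * ((m : ℝ) + 1 + ν)) := by
    rw [← C_mul]; congr 1; field_simp
  have h2 : C ((m : ℝ) + 2) * C (((m : ℝ) + 2 * ν) / ((m : ℝ) + 2))
      = C ((m : ℝ) + 2 * ν) := by
    rw [← C_mul]; congr 1; field_simp
  show C ((m : ℝ) + 2) * (C (2 * ((m : ℝ) + 1 + ν) / ((m : ℝ) + 2)) * X * gegenbauer ν (m + 1)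
        - C (((m : ℝ) + 2 * ν) / ((m : ℝ) + 2)) * gegenbauer ν m) = _
  linear_combination (X * gegenbauer ν (m+1)) * h1 - gegenbauer ν m * h2

lemma geg_BD (ν : ℝ) : ∀ m : ℕ,
    C ((m : ℝ) + 1) * gegenbauer ν (m + 1)
        = C ((m : ℝ) + 2 * ν) * X * gegenbauer ν m
          - (1 - X ^ 2) * derivative (gegenbauer ν m)
      ∧ derivative (gegenbauer ν (m + 1))
        = C ((m : ℝ) + 2 * ν) * gegenbauer ν m + X * derivative (gegenbauer ν m)
  | 0 => by
    constructor <;> simp [gegenbauer] <;> ring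
  | (m + 1) => by
    obtain ⟨hB, hD⟩ := geg_BD ν m
    have hI : X * derivative (gegenbauer ν (m + 1))
        - C ((m : ℝ) + 1) * gegenbauer ν (m + 1) = derivative (gegenbauer ν m) := by
      linear_combination X * hD - hB
    have hrec := geg_rec ν m
    have hrecd := congrArg derivative hrec
    simp only [derivative_mul, derivative_C, derivative_X, zero_mul, one_mul, zero_add,
      mul_one, derivative_sub] at hrecd
    have hC : (C ((m : ℝ) + 2) : Polynomial ℝ) ≠ 0 := by
      exact C_ne_zero.mpr (by positivity)
    constructor
    · push_cast
      simp only [C_add, C_mul, C_1, map_ofNat] at hrec hB hD ⊢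
      linear_combination hrec + (1 - X^2) * hD + X * hB
    · apply mul_left_cancel₀ hC
      push_cast
      simp only [C_add, C_mul, C_1, map_ofNat] at hrecd hI ⊢
      linear_combination hrecd + (C (m:ℝ) + 2 * C ν) * hI

lemma geg_ode (ν : ℝ) (m : ℕ) :
    (1 - X ^ 2) * derivative (derivative (gegenbauer ν m))
      - C (2 * ν + 1) * X * derivative (gegenbauer ν m)
      + C ((m : ℝ) * ((m : ℝ) + 2 * ν)) * gegenbauer ν m = 0 := by
  obtain ⟨hB, hD⟩ := geg_BD ν m
  have hdB := congrArg derivative hB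
  simp only [derivative_mul, derivative_C, derivative_X, derivative_sub, derivative_one,
    derivative_pow, zero_mul, one_mul, zero_add, mul_one, zero_sub, Nat.cast_ofNat,
    pow_one, Nat.add_sub_cancel] at hdB
  simp only [C_add, C_mul, C_1, map_ofNat] at hdB hD ⊢
  linear_combination hdB - (C (m:ℝ) + 1) * hD

lemma geg_ode_eval (ν : ℝ) (m : ℕ) (z : ℝ) :
    (1 - z ^ 2) * eval z (derivative (derivative (gegenbauer ν m)))
      - (2 * ν + 1) * z * eval z (derivative (gegenbauer ν m))
      + (m : ℝ) * ((m : ℝ) + 2 * ν) * eval z (gegenbauer ν m) = 0 := by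
  have h := congrArg (eval z) (geg_ode ν m)
  simpa using h

/-- The functions `v_m(x) = C_m^{n+1}(cos πx)·(sin πx)^{n+1}` are eigenfunctions of the
Pöschl–Teller Hamiltonian `-d²/dx² + n(n+1)π²/sin²(πx)` with eigenvalue `π²(m+n+1)²`. -/
theorem poschl_teller_eigenfunction (n : ℕ) (hn : 1 ≤ n) (m : ℕ) :
    ∀ x ∈ Set.Ioo (0 : ℝ) 1,
      -(deriv (deriv (fun y : ℝ =>
          (gegenbauer (n + 1) m).eval (Real.cos (π * y)) * (Real.sin (π * y)) ^ (n + 1))) x)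
        + (n * (n + 1)) * (π ^ 2 / (Real.sin (π * x)) ^ 2) *
            ((gegenbauer (n + 1) m).eval (Real.cos (π * x)) * (Real.sin (π * x)) ^ (n + 1))
      = π ^ 2 * ((m : ℝ) + n + 1) ^ 2 *
            ((gegenbauer (n + 1) m).eval (Real.cos (π * x)) * (Real.sin (π * x)) ^ (n + 1)) := by
  obtain ⟨n, rfl⟩ : ∃ n', n = n' + 1 := ⟨n - 1, by omega⟩
  intro x hx
  set ν : ℝ := (↑(n + 1) : ℝ) + 1 with hν
  set P : Polynomial ℝ := gegenbauer ν m with hP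
  set P1 := derivative P with hP1
  set P2 := derivative P1 with hP2
  -- building blocks
  have hπ : ∀ y : ℝ, HasDerivAt (fun t : ℝ => π * t) (π * 1) y :=
    fun y => (hasDerivAt_id y).const_mul π
  have hcos : ∀ y : ℝ, HasDerivAt (fun t : ℝ => Real.cos (π * t))
      (-Real.sin (π * y) * (π * 1)) y := fun y => (hπ y).cos
  have hsin : ∀ y : ℝ, HasDerivAt (fun t : ℝ => Real.sin (π * t))
      (Real.cos (π * y) * (π * 1)) y := fun y => (hπ y).sin
  have hp : ∀ y : ℝ, HasDerivAt (fun t : ℝ => eval (Real.cos (π * t)) P)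
      (eval (Real.cos (π * y)) P1 * (-Real.sin (π * y) * (π * 1))) y :=
    fun y => HasDerivAt.comp (h₂ := fun z => eval z P) y (Polynomial.hasDerivAt P (Real.cos (π * y))) (hcos y)
  have hp1 : ∀ y : ℝ, HasDerivAt (fun t : ℝ => eval (Real.cos (π * t)) P1)
      (eval (Real.cos (π * y)) P2 * (-Real.sin (π * y) * (π * 1))) y :=
    fun y => HasDerivAt.comp (h₂ := fun z => eval z P1) y (Polynomial.hasDerivAt P1 (Real.cos (π * y))) (hcos y)
  have hd1 : ∀ y : ℝ, HasDerivAt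
      (fun t : ℝ => eval (Real.cos (π * t)) P * Real.sin (π * t) ^ (n + 1 + 1))
      (eval (Real.cos (π * y)) P1 * (-Real.sin (π * y) * (π * 1)) * Real.sin (π * y) ^ (n + 1 + 1)
        + eval (Real.cos (π * y)) P *
          (↑(n + 1 + 1) * Real.sin (π * y) ^ (n + 1) * (Real.cos (π * y) * (π * 1)))) y :=
    fun y => (hp y).mul ((hsin y).pow (n + 1 + 1))
  have hD1 : deriv (fun t : ℝ => eval (Real.cos (π * t)) P * Real.sin (π * t) ^ (n + 1 + 1))
      = fun y => eval (Real.cos (π * y)) P1 * (-Real.sin (π * y) * (π * 1)) *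
          Real.sin (π * y) ^ (n + 1 + 1)
        + eval (Real.cos (π * y)) P *
          (↑(n + 1 + 1) * Real.sin (π * y) ^ (n + 1) * (Real.cos (π * y) * (π * 1))) :=
    funext fun y => (hd1 y).deriv
  have hd2 : HasDerivAt (fun y => eval (Real.cos (π * y)) P1 * (-Real.sin (π * y) * (π * 1)) *
          Real.sin (π * y) ^ (n + 1 + 1)
        + eval (Real.cos (π * y)) P *
          (↑(n + 1 + 1) * Real.sin (π * y) ^ (n + 1) * (Real.cos (π * y) * (π * 1))))
      ((eval (Real.cos (π * x)) P2 * (-Real.sin (π * x) * (π * 1)) * (-Real.sin (π * x) * (π * 1))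
          + eval (Real.cos (π * x)) P1 * (-(Real.cos (π * x) * (π * 1)) * (π * 1))) *
            Real.sin (π * x) ^ (n + 1 + 1)
        + eval (Real.cos (π * x)) P1 * (-Real.sin (π * x) * (π * 1)) *
            (↑(n + 1 + 1) * Real.sin (π * x) ^ (n + 1) * (Real.cos (π * x) * (π * 1)))
        + (eval (Real.cos (π * x)) P1 * (-Real.sin (π * x) * (π * 1)) *
            (↑(n + 1 + 1) * Real.sin (π * x) ^ (n + 1) * (Real.cos (π * x) * (π * 1)))
          + eval (Real.cos (π * x)) P *
            (↑(n + 1 + 1) * (↑(n + 1) * Real.sin (π * x) ^ n * (Real.cos (π * x) * (π * 1))) *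
                (Real.cos (π * x) * (π * 1))
              + ↑(n + 1 + 1) * Real.sin (π * x) ^ (n + 1) *
                (-Real.sin (π * x) * (π * 1) * (π * 1))))) x := by
    have t1 : HasDerivAt (fun y : ℝ => -Real.sin (π * y) * (π * 1))
        (-(Real.cos (π * x) * (π * 1)) * (π * 1)) x := ((hsin x).neg).mul_const (π * 1)
    have t2 : HasDerivAt (fun y : ℝ => ↑(n + 1 + 1) * Real.sin (π * y) ^ (n + 1) *
          (Real.cos (π * y) * (π * 1)))
        (↑(n + 1 + 1) * (↑(n + 1) * Real.sin (π * x) ^ n * (Real.cos (π * x) * (π * 1))) *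
            (Real.cos (π * x) * (π * 1))
          + ↑(n + 1 + 1) * Real.sin (π * x) ^ (n + 1) *
            (-Real.sin (π * x) * (π * 1) * (π * 1))) x :=
      ((((hsin x).pow (n + 1)).const_mul (↑(n + 1 + 1) : ℝ)).mul ((hcos x).mul_const (π * 1)))
    exact (((hp1 x).mul t1).mul ((hsin x).pow (n + 1 + 1))).add ((hp x).mul t2)
  have hsx : Real.sin (π * x) ≠ 0 := by
    obtain ⟨h0, h1⟩ := hx
    have := Real.sin_pos_of_pos_of_lt_pi (x := π * x) (by positivity)
      (by nlinarith [Real.pi_pos])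
    linarith
  rw [hD1, hd2.deriv]
  have hode := geg_ode_eval ν m (Real.cos (π * x))
  have hpy := Real.sin_sq_add_cos_sq (π * x)
  have hdiv : π ^ 2 / Real.sin (π * x) ^ 2 *
      (eval (Real.cos (π * x)) P * Real.sin (π * x) ^ (n + 1 + 1))
      = π ^ 2 * eval (Real.cos (π * x)) P * Real.sin (π * x) ^ n := by
    rw [pow_succ, pow_succ]
    field_simp
    ring
  rw [hν] at hode
  set s := Real.sin (π * x) with hs
  set c := Real.cos (π * x) with hc
  set a := eval c P with ha
  set b := eval c P1 with hb
  set d := eval c P2 with hd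
  push_cast
  rw [mul_assoc _ (π ^ 2 / s ^ 2), hdiv]
  push_cast at hode
  have hcast : ((n + 1 : ℕ) : ℝ) = (n : ℝ) + 1 := by push_cast; ring
  linear_combination (s ^ n * π ^ 2 * a * ((n : ℝ) + 1)) * hcast +
    (-(π ^ 2 * s ^ (n + 2))) * hode +
    (-(π ^ 2 * s ^ (n + 2) * d) - π ^ 2 * ((↑n + 2) * (↑n + 1)) * s ^ n * a) * hpy
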